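/- arXiv:1606.07528 — 3 statements merged into one kernel-verified Lean document; each statement's English description precedes it below -/
import Mathlib

section
/- Soundness of the proof system SELA: every formula of the epistemic action language EAL that is derivable in SELA is valid on uncertainty maps, i.e., true at every pointed uncertainty map. -/
/-- Formulas of the epistemic action language EAL. -/
inductive EAL (P A : Type) : Type
  | top : EAL P A
  | atom : P → EAL P A
  | neg : EAL P A → EAL P A
  | and : EAL P A → EAL P A → EAL P A
  | box : A → EAL P A → EAL P A
  | know : EAL P A → EAL P A

namespace EAL
variable {P A : Type}
/-- φ ∨ ψ := ¬(¬φ ∧ ¬ψ) -/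
def or (φ ψ : EAL P A) : EAL P A := neg (and (neg φ) (neg ψ))
/-- φ → ψ := ¬φ ∨ ψ -/
def imp (φ ψ : EAL P A) : EAL P A := or (neg φ) ψ
def iff (φ ψ : EAL P A) : EAL P A := and (imp φ ψ) (imp ψ φ)
/-- ⟨a⟩φ := ¬[a]¬φ -/
def dia (a : A) (φ : EAL P A) : EAL P A := neg (box a (neg φ))
end EAL

/-- A Kripke model with labelled relations. -/
structure Kripke (P A : Type) where
  S : Type
  R : A → S → S → Prop
  V : S → P → Prop

namespace Kripke
variable {P A : Type}
/-- U|^a -/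
def img (N : Kripke P A) (a : A) (U : Set N.S) : Set N.S := {t | ∃ u ∈ U, N.R a u t}
end Kripke

/-- Semantics of EAL on an uncertainty map (Kripke model + uncertainty set). -/
def ealSat {P A : Type} (N : Kripke P A) : Set N.S → N.S → EAL P A → Prop
  | _, _, .top => True
  | _, s, .atom p => N.V s p
  | U, s, .neg φ => ¬ ealSat N U s φ
  | U, s, .and φ ψ => ealSat N U s φ ∧ ealSat N U s ψ
  | U, s, .box a φ => ∀ t, N.R a s t → ealSat N (N.img a U) t φ
  | U, _, .know φ => ∀ u ∈ U, ealSat N U u φ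

/-- Validity: truth at every pointed uncertainty map. -/
def ealValid {P A : Type} (φ : EAL P A) : Prop :=
  ∀ (N : Kripke P A) (U : Set N.S), U.Nonempty → ∀ s ∈ U, ealSat N U s φ

/-- Evaluation of a formula as a propositional formula, treating atoms,
box-formulas and K-formulas as propositional variables with truth values given by `v`. -/
def EAL.propEval {P A : Type} (v : EAL P A → Prop) : EAL P A → Prop
  | .top => True
  | .neg φ => ¬ EAL.propEval v φ
  | .and φ ψ => EAL.propEval v φ ∧ EAL.propEval v ψ
  | φ => v φ

/-- Uniform substitution of formulas for proposition letters. -/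
def EAL.subst {P A : Type} (σ : P → EAL P A) : EAL P A → EAL P A
  | .top => .top
  | .atom p => σ p
  | .neg φ => .neg (EAL.subst σ φ)
  | .and φ ψ => .and (EAL.subst σ φ) (EAL.subst σ ψ)
  | .box a φ => .box a (EAL.subst σ φ)
  | .know φ => .know (EAL.subst σ φ)

/-- The proof system SELA. -/
inductive SELA {P A : Type} : EAL P A → Prop
  | taut {φ : EAL P A} : (∀ v : EAL P A → Prop, EAL.propEval v φ) → SELA φ
  | distK (p q : P) :
      SELA (EAL.imp (EAL.know (EAL.imp (EAL.atom p) (EAL.atom q)))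
        (EAL.imp (EAL.know (EAL.atom p)) (EAL.know (EAL.atom q))))
  | distBox (a : A) (p q : P) :
      SELA (EAL.imp (EAL.box a (EAL.imp (EAL.atom p) (EAL.atom q)))
        (EAL.imp (EAL.box a (EAL.atom p)) (EAL.box a (EAL.atom q))))
  | axT (p : P) : SELA (EAL.imp (EAL.know (EAL.atom p)) (EAL.atom p))
  | ax4 (p : P) : SELA (EAL.imp (EAL.know (EAL.atom p)) (EAL.know (EAL.know (EAL.atom p))))
  | ax5 (p : P) :
      SELA (EAL.imp (EAL.neg (EAL.know (EAL.atom p))) (EAL.know (EAL.neg (EAL.know (EAL.atom p)))))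
  | zig (a : A) (p : P) :
      SELA (EAL.imp (EAL.know (EAL.box a (EAL.atom p))) (EAL.box a (EAL.know (EAL.atom p))))
  | zag (a : A) (p : P) :
      SELA (EAL.imp (EAL.dia a (EAL.know (EAL.atom p))) (EAL.know (EAL.box a (EAL.atom p))))
  | mp {φ ψ : EAL P A} : SELA (EAL.imp φ ψ) → SELA φ → SELA ψ
  | necK {φ : EAL P A} : SELA φ → SELA (EAL.know φ)
  | necBox (a : A) {φ : EAL P A} : SELA φ → SELA (EAL.box a φ)
  | sub (σ : P → EAL P A) {φ : EAL P A} : SELA φ → SELA (EAL.subst σ φ)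

/-- Finite conjunction of a list of formulas. -/
def conjList {P A : Type} : List (EAL P A) → EAL P A
  | [] => .top
  | φ :: L => .and φ (conjList L)

/-- Γ is SELA-consistent: no finite conjunction of members of Γ has its negation derivable. -/
def SELAConsistent {P A : Type} (Γ : Set (EAL P A)) : Prop :=
  ∀ L : List (EAL P A), (∀ φ ∈ L, φ ∈ Γ) → ¬ SELA (EAL.neg (conjList L))

section Soundness

variable {P A : Type}

lemma ealSat_imp {N : Kripke P A} {U : Set N.S} {s : N.S} {φ ψ : EAL P A} :
    ealSat N U s (EAL.imp φ ψ) ↔ (ealSat N U s φ → ealSat N U s ψ) := by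
  simp [EAL.imp, EAL.or, ealSat]

lemma propEval_iff (N : Kripke P A) (U : Set N.S) (s : N.S) (φ : EAL P A) :
    EAL.propEval (ealSat N U s) φ ↔ ealSat N U s φ := by
  induction φ with
  | top => simp [EAL.propEval, ealSat]
  | atom p => rfl
  | neg φ ih => simp [EAL.propEval, ealSat, ih]
  | and φ ψ ih1 ih2 => simp [EAL.propEval, ealSat, ih1, ih2]
  | box a φ _ => rfl
  | know φ _ => rfl

/-- Model used for the substitution case: states remember the current uncertainty set. -/
def liftK (σ : P → EAL P A) (N : Kripke P A) : Kripke P A where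
  S := Set N.S × N.S
  R a x y := y.1 = N.img a x.1 ∧ N.R a x.2 y.2
  V x p := ealSat N x.1 x.2 (σ p)

lemma liftK_img (σ : P → EAL P A) (N : Kripke P A) (a : A) (U : Set N.S) :
    (liftK σ N).img a ((fun u => ((U : Set N.S), u)) '' U)
      = (fun t => (N.img a U, t)) '' (N.img a U) := by
  ext x
  constructor
  · rintro ⟨u, ⟨u', hu', rfl⟩, h1, h2⟩
    obtain ⟨x1, x2⟩ := x
    exact ⟨x2, ⟨u', hu', h2⟩, by simp_all⟩
  · rintro ⟨t, ⟨u, hu, hR⟩, rfl⟩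
    exact ⟨(U, u), ⟨u, hu, rfl⟩, rfl, hR⟩

lemma liftK_sat (σ : P → EAL P A) (N : Kripke P A) (φ : EAL P A) :
    ∀ (U : Set N.S) (s : N.S),
      ealSat (liftK σ N) ((fun u => ((U : Set N.S), u)) '' U) (U, s) φ
        ↔ ealSat N U s (EAL.subst σ φ) := by
  induction φ with
  | top => intro U s; simp [ealSat, EAL.subst]
  | atom p => intro U s; rfl
  | neg φ ih => intro U s; simp only [ealSat, EAL.subst, ih]
  | and φ ψ ih1 ih2 => intro U s; simp only [ealSat, EAL.subst, ih1, ih2]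
  | box a φ ih =>
    intro U s
    simp only [ealSat, EAL.subst]
    constructor
    · intro h t hR
      have := h (N.img a U, t) ⟨rfl, hR⟩
      rw [liftK_img] at this
      exact (ih (N.img a U) t).mp this
    · rintro h ⟨V', t⟩ ⟨hV, hR⟩
      subst hV
      rw [liftK_img]
      exact (ih (N.img a U) t).mpr (h t hR)
  | know φ ih =>
    intro U s
    simp only [ealSat, EAL.subst]
    constructor
    · intro h u hu
      exact (ih U u).mp (h (U, u) ⟨u, hu, rfl⟩)
    · rintro h x ⟨u, hu, rfl⟩
      exact (ih U u).mpr (h u hu)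

/-- Soundness of SELA: every EAL formula derivable in SELA is valid
on uncertainty maps, i.e., true at every pointed uncertainty map. -/
theorem SELA.soundness {P A : Type} [Countable P] [Countable A]
    (φ : EAL P A) (h : SELA φ) : ealValid φ := by
  induction h with
  | taut hv =>
    intro N U _ s _
    exact (propEval_iff N U s _).mp (hv _)
  | distK p q =>
    intro N U _ s _
    rw [ealSat_imp]; intro h1
    rw [ealSat_imp]; intro h2
    intro u hu
    exact ealSat_imp.mp (h1 u hu) (h2 u hu)
  | distBox a p q =>
    intro N U _ s _
    rw [ealSat_imp]; intro h1
    rw [ealSat_imp]; intro h2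
    intro t ht
    exact ealSat_imp.mp (h1 t ht) (h2 t ht)
  | axT p =>
    intro N U _ s hs
    rw [ealSat_imp]; intro h
    exact h s hs
  | ax4 p =>
    intro N U _ s _
    rw [ealSat_imp]; intro h
    intro u _ v hv
    exact h v hv
  | ax5 p =>
    intro N U _ s _
    rw [ealSat_imp]; intro h
    intro u _ h'
    exact h h'
  | zig a p =>
    intro N U _ s hs
    rw [ealSat_imp]; intro h
    rintro t _ u ⟨u', hu', hR⟩
    exact h u' hu' u hR
  | zag a p =>
    intro N U _ s hs
    rw [ealSat_imp]; intro h
    intro u hu t hR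
    have h' : ¬ ∀ t, N.R a s t → ¬ ∀ v ∈ N.img a U, N.V v p := h
    push_neg at h'
    obtain ⟨t', _, h''⟩ := h'
    exact h'' t ⟨u, hu, hR⟩
  | mp _ _ ih1 ih2 =>
    intro N U hU s hs
    exact ealSat_imp.mp (ih1 N U hU s hs) (ih2 N U hU s hs)
  | necK _ ih =>
    intro N U hU s hs u hu
    exact ih N U hU u hu
  | necBox a _ ih =>
    intro N U hU s hs t ht
    exact ih N (N.img a U) ⟨t, s, hs, ht⟩ t ⟨s, hs, ht⟩
  | sub σ _ ih =>
    intro N U hU s hs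
    rw [← liftK_sat σ N _ U s]
    obtain ⟨u0, hu0⟩ := hU
    exact ih (liftK σ N) ((fun u => ((U : Set N.S), u)) '' U)
      ⟨(U, u0), ⟨u0, hu0, rfl⟩⟩ (U, s) ⟨s, hs, rfl⟩

end Soundness
end

section
/- The perfect recall axiom is valid on uncertainty maps: for every action symbol a and every EAL formula φ, the formula K[a]φ → [a]Kφ is true at every pointed uncertainty map. -/
/-- The perfect recall axiom is valid on uncertainty maps: for every
action symbol a and every EAL formula φ, K[a]φ → [a]Kφ is true at every pointed
uncertainty map. -/
theorem perfect_recall_valid {P A : Type} [Countable P] [Countable A]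
    (a : A) (φ : EAL P A) :
    ealValid (EAL.imp (EAL.know (EAL.box a φ)) (EAL.box a (EAL.know φ))) := by
  intro N U _ s _
  simp only [EAL.imp, EAL.or, ealSat, not_and, not_not, not_forall]
  intro h ht
  obtain ⟨t, hst, u, ⟨v, hv, hvu⟩, hu⟩ := ht
  exact hu ((by simpa using h : ∀ x ∈ U, ∀ y, N.R a x y → ealSat N (N.img a U) y φ) v hv u hvu)
end

section
/- The no-miracles axiom is valid on uncertainty maps: for every action symbol a and every EAL formula φ, the formula ⟨a⟩Kφ → K[a]φ is true at every pointed uncertainty map. -/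
/-- The no-miracles axiom is valid on uncertainty maps: for every
action symbol a and every EAL formula φ, ⟨a⟩Kφ → K[a]φ is true at every pointed
uncertainty map. -/
theorem no_miracles_valid {P A : Type} [Countable P] [Countable A]
    (a : A) (φ : EAL P A) :
    ealValid (EAL.imp (EAL.dia a (EAL.know φ)) (EAL.know (EAL.box a φ))) := by
  intro N U _ s _
  unfold EAL.imp EAL.or EAL.dia
  show ¬ (¬¬¬(∀ t, N.R a s t → ¬ ∀ u ∈ N.img a U, ealSat N (N.img a U) u φ)
      ∧ ¬ ∀ u ∈ U, ∀ t, N.R a u t → ealSat N (N.img a U) t φ)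
  rintro ⟨h1, h2⟩
  rw [not_not] at h1
  apply h2
  intro u hu v huv
  by_contra hv
  apply h1
  intro t hst hK
  exact hv (hK v ⟨u, hu, huv⟩)
end
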